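/- Let α ∈ (0,1), ν ∈ ℕ with 2ν > 1/(1-α). For any M ≥ 1 and m ∈ ℕ, (1/(2M)) ∫_{-M}^{M} |(K_{α,ν}(x + 2^{-2νm-1}) - K_{α,ν}(x))/2^{-2νm-1}| dx ≥ (1/4) ((2^{2ν(1-α)} - 2)/(2^{2ν(1-α)} - 1)) (2^{2ν(1-α)})^m. -/

import Mathlib

/-- The sawtooth function: φ(x) = |x| on [-1,1], extended 2-periodically. -/
noncomputable def phi (x : ℝ) : ℝ := |x - 2 * round (x / 2)|

lemma phi_nonneg (x : ℝ) : 0 ≤ phi x := abs_nonneg _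

lemma phi_le_one (x : ℝ) : phi x ≤ 1 := by
  have h := abs_sub_round (x / 2)
  unfold phi
  rw [show x - 2 * round (x/2) = 2 * (x/2 - round (x/2)) by ring, abs_mul]
  rw [abs_two]
  linarith [abs_sub_round (x/2)]

lemma phi_le_abs (x : ℝ) (k : ℤ) : phi x ≤ |x - 2 * k| := by
  unfold phi
  rw [show x - 2 * round (x/2) = 2 * (x/2 - round (x/2)) by ring,
      show x - 2 * (k:ℝ) = 2 * (x/2 - k) by ring, abs_mul, abs_mul, abs_two]
  have := round_le (x/2) k
  linarith

lemma phi_lip (a b : ℝ) : |phi a - phi b| ≤ |a - b| := by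
  rw [abs_sub_le_iff]
  constructor
  · have h1 : phi a ≤ |a - 2 * round (b/2)| := phi_le_abs a _
    have h2 : |a - 2 * round (b/2)| ≤ |a - b| + |b - 2 * round (b/2)| := by
      have := abs_sub_abs_le_abs_sub (a - 2 * (round (b/2):ℝ)) (b - 2 * (round (b/2):ℝ))
      calc |a - 2 * (round (b/2):ℝ)| = |(a - b) + (b - 2 * round (b/2))| := by ring_nf
        _ ≤ |a - b| + |b - 2 * (round (b/2):ℝ)| := abs_add_le _ _
    have : phi b = |b - 2 * round (b/2)| := rfl
    linarith
  · have h1 : phi b ≤ |b - 2 * round (a/2)| := phi_le_abs b _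
    have h2 : |b - 2 * (round (a/2):ℝ)| ≤ |b - a| + |a - 2 * (round (a/2):ℝ)| := by
      calc |b - 2 * (round (a/2):ℝ)| = |(b - a) + (a - 2 * round (a/2))| := by ring_nf
        _ ≤ |b - a| + |a - 2 * (round (a/2):ℝ)| := abs_add_le _ _
    have : phi a = |a - 2 * round (a/2)| := rfl
    rw [abs_sub_comm b a] at h2
    linarith

lemma phi_continuous : Continuous phi := by
  have : LipschitzWith 1 phi := by
    intro a b
    rw [edist_dist, edist_dist, ENNReal.coe_one, one_mul]
    exact ENNReal.ofReal_le_ofReal (phi_lip a b)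
  exact this.continuous

lemma phi_add_two_int (x : ℝ) (k : ℤ) : phi (x + 2 * k) = phi x := by
  unfold phi
  rw [show (x + 2 * (k:ℝ)) / 2 = x / 2 + k by ring, round_add_intCast]
  push_cast
  ring_nf

lemma phi_eq_abs {x : ℝ} (hx : |x| ≤ 1) : phi x = |x| := by
  rcases eq_or_lt_of_le hx with h | h
  · rcases (abs_eq (by norm_num : (0:ℝ) ≤ 1)).mp h with h1 | h1 <;>
      (unfold phi; rw [h1]; norm_num [round_eq])
  · unfold phi
    rw [abs_lt] at h
    have : round (x / 2) = 0 := by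
      rw [round_eq_zero_iff]
      exact Set.mem_Ico.mpr ⟨by linarith, by linarith⟩
    rw [this]
    norm_num

lemma phi_half_step (y : ℝ) :
    |phi (y + 1/2) - phi y| = 1/2 ∨ |phi (y - 1/2) - phi y| = 1/2 := by
  obtain ⟨d, hdb, hy, hrep⟩ :
      ∃ d : ℝ, |d| ≤ 1 ∧ phi y = |d| ∧ ∀ c : ℝ, phi (y + c) = phi (d + c) := by
    refine ⟨y - 2 * round (y/2), phi_le_one y, rfl, fun c => ?_⟩
    have : y + c = ((y - 2 * round (y/2)) + c) + 2 * (round (y/2) : ℤ) := by push_cast; ring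
    rw [this, phi_add_two_int]
  rw [abs_le] at hdb
  obtain ⟨hdb1, hdb2⟩ := hdb
  rcases le_or_gt 0 d with h0 | h0
  · rcases le_or_gt d (1/2) with h1 | h1
    · left
      rw [hrep, hy, phi_eq_abs (by rw [abs_le]; exact ⟨by linarith, by linarith⟩),
        abs_of_nonneg (by linarith : (0:ℝ) ≤ d + 1/2), abs_of_nonneg h0]
      rw [abs_of_nonneg (by linarith)]; linarith
    · right
      rw [show y - 1/2 = y + (-(1/2)) by ring, hrep, hy,
        phi_eq_abs (by rw [abs_le]; exact ⟨by linarith, by linarith⟩),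
        abs_of_nonneg (by linarith : (0:ℝ) ≤ d + -(1/2)), abs_of_nonneg h0]
      rw [abs_of_nonpos (by linarith)]; linarith
  · rcases le_or_gt (-(1/2)) d with h1 | h1
    · right
      rw [show y - 1/2 = y + (-(1/2)) by ring, hrep, hy,
        phi_eq_abs (by rw [abs_le]; exact ⟨by linarith, by linarith⟩),
        abs_of_nonpos (by linarith : d + -(1/2) ≤ 0), abs_of_nonpos h0.le]
      rw [abs_of_nonneg (by linarith)]; linarith
    · left
      rw [hrep, hy, phi_eq_abs (by rw [abs_le]; exact ⟨by linarith, by linarith⟩),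
        abs_of_nonpos (by linarith : d + 1/2 ≤ 0), abs_of_nonpos h0.le]
      rw [abs_of_nonpos (by linarith)]; linarith

/-- The Knopp-type function K_{α,ν}. -/
noncomputable def Kfun (α : ℝ) (ν : ℕ) (x : ℝ) : ℝ :=
  ∑' k : ℕ, (2 : ℝ) ^ (-(2 * α * (ν : ℝ) * (k : ℝ))) * phi ((2 : ℝ) ^ (2 * ν * k) * x)

noncomputable def fterm (α : ℝ) (ν : ℕ) (k : ℕ) (x : ℝ) : ℝ :=
  (2 : ℝ) ^ (-(2 * α * (ν : ℝ) * (k : ℝ))) * phi ((2 : ℝ) ^ (2 * ν * k) * x)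

lemma Kfun_eq (α : ℝ) (ν : ℕ) (x : ℝ) : Kfun α ν x = ∑' k, fterm α ν k x := rfl

lemma rpow_natmul (c : ℝ) (k : ℕ) : ((2:ℝ) ^ c) ^ k = (2:ℝ) ^ (c * k) := by
  rw [← Real.rpow_natCast ((2:ℝ)^c) k, ← Real.rpow_mul (by norm_num)]

lemma fterm_nonneg (α : ℝ) (ν : ℕ) (k : ℕ) (x : ℝ) : 0 ≤ fterm α ν k x :=
  mul_nonneg (Real.rpow_nonneg (by norm_num) _) (phi_nonneg _)

lemma fterm_le (α : ℝ) (ν : ℕ) (k : ℕ) (x : ℝ) :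
    fterm α ν k x ≤ ((2:ℝ) ^ (-(2 * α * (ν:ℝ)))) ^ k := by
  rw [rpow_natmul]
  calc fterm α ν k x ≤ (2:ℝ) ^ (-(2 * α * (ν:ℝ) * k)) * 1 :=
        mul_le_mul_of_nonneg_left (phi_le_one _) (Real.rpow_nonneg (by norm_num) _)
    _ = (2:ℝ) ^ (-(2 * α * (ν:ℝ)) * k) := by rw [mul_one]; ring_nf

lemma summable_fterm (α : ℝ) (ν : ℕ) (hα0 : 0 < α) (hν1 : 1 ≤ ν) (x : ℝ) :
    Summable (fun k => fterm α ν k x) := by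
  have hr0 : (0:ℝ) ≤ (2:ℝ) ^ (-(2 * α * (ν:ℝ))) := Real.rpow_nonneg (by norm_num) _
  have hr1 : (2:ℝ) ^ (-(2 * α * (ν:ℝ))) < 1 := by
    apply Real.rpow_lt_one_of_one_lt_of_neg (by norm_num)
    have : (0:ℝ) < (ν:ℝ) := by exact_mod_cast hν1
    nlinarith
  exact Summable.of_nonneg_of_le (fun k => fterm_nonneg α ν k x) (fun k => fterm_le α ν k x)
    (summable_geometric_of_lt_one hr0 hr1)

lemma Kfun_continuous (α : ℝ) (ν : ℕ) (hα0 : 0 < α) (hν1 : 1 ≤ ν) :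
    Continuous (Kfun α ν) := by
  have hr0 : (0:ℝ) ≤ (2:ℝ) ^ (-(2 * α * (ν:ℝ))) := Real.rpow_nonneg (by norm_num) _
  have hr1 : (2:ℝ) ^ (-(2 * α * (ν:ℝ))) < 1 := by
    apply Real.rpow_lt_one_of_one_lt_of_neg (by norm_num)
    have : (0:ℝ) < (ν:ℝ) := by exact_mod_cast hν1
    nlinarith
  apply continuous_tsum (f := fun k x => fterm α ν k x)
    (u := fun k => ((2:ℝ) ^ (-(2 * α * (ν:ℝ)))) ^ k)
  · intro k
    exact continuous_const.mul (phi_continuous.comp (continuous_const.mul continuous_id))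
  · exact summable_geometric_of_lt_one hr0 hr1
  · intro k x
    rw [Real.norm_eq_abs, abs_of_nonneg (fterm_nonneg α ν k x)]
    exact fterm_le α ν k x

lemma Kfun_pointwise (α : ℝ) (ν : ℕ) (hα0 : 0 < α) (hα1 : α < 1) (hν1 : 1 ≤ ν)
    (hνα : 1 < 2 * (ν:ℝ) * (1 - α)) (m : ℕ) (x : ℝ)
    (ε : ℤ) (hε : ε = 1 ∨ ε = -1)
    (hstep : |phi ((2:ℝ)^(2*ν*m) * x + (ε:ℝ) * (1/2)) - phi ((2:ℝ)^(2*ν*m) * x)| = 1/2) :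
    ((2:ℝ)^(2*(ν:ℝ)*(1-α)) - 2)/((2:ℝ)^(2*(ν:ℝ)*(1-α)) - 1) * ((2:ℝ)^(2*(ν:ℝ)*(1-α)))^m
      ≤ |Kfun α ν (x + (ε:ℝ) * (2:ℝ)^(-(2*(ν:ℤ)*(m:ℤ)+1))) - Kfun α ν x|
          / (2:ℝ)^(-(2*(ν:ℤ)*(m:ℤ)+1)) := by
  set T : ℝ := (2:ℝ)^(-(2*(ν:ℤ)*(m:ℤ)+1)) with hTdef
  set L : ℝ := (2:ℝ)^(2*(ν:ℝ)*(1-α)) with hLdef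
  have hT : (0:ℝ) < T := zpow_pos (by norm_num) _
  have hL2 : (2:ℝ) < L := by
    rw [hLdef]
    calc (2:ℝ) = (2:ℝ) ^ (1:ℝ) := (Real.rpow_one 2).symm
      _ < _ := by
          apply Real.rpow_lt_rpow_left_iff (by norm_num : (1:ℝ) < 2) |>.mpr hνα
  have hεabs : |(ε:ℝ)| = 1 := by rcases hε with h | h <;> simp [h]
  -- T as rpow
  have hTr : T = (2:ℝ) ^ ((-(2*(ν:ℝ)*(m:ℝ)+1)) : ℝ) := by
    rw [hTdef, ← Real.rpow_intCast 2 (-(2*(ν:ℤ)*(m:ℤ)+1))]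
    congr 1
    push_cast; ring
  -- 2^(2νm) * T = 1/2
  have hpmT : (2:ℝ)^(2*ν*m) * T = 1/2 := by
    rw [← Real.rpow_natCast 2 (2*ν*m), hTr, ← Real.rpow_add (by norm_num)]
    rw [show ((2*ν*m : ℕ):ℝ) + (-(2*(ν:ℝ)*(m:ℝ)+1)) = -1 by push_cast; ring]
    rw [Real.rpow_neg_one]; norm_num
  -- a k * p k = L^k
  have haP : ∀ k : ℕ, (2:ℝ)^(-(2*α*(ν:ℝ)*(k:ℝ))) * (2:ℝ)^(2*ν*k) = L^k := by
    intro k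
    rw [hLdef, rpow_natmul, ← Real.rpow_natCast 2 (2*ν*k), ← Real.rpow_add (by norm_num)]
    congr 1
    push_cast; ring
  -- a m = 2 * T * L^m
  have haM : (2:ℝ)^(-(2*α*(ν:ℝ)*(m:ℝ))) = 2 * T * L^m := by
    have : 2 * T * L^m = (2:ℝ)^((1:ℝ) + (-(2*(ν:ℝ)*(m:ℝ)+1)) + 2*(ν:ℝ)*(1-α)*m) := by
      rw [Real.rpow_add (by norm_num), Real.rpow_add (by norm_num), Real.rpow_one,
        ← hTr, hLdef, rpow_natmul]
    rw [this]
    congr 1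
    ring
  set g : ℕ → ℝ := fun k => fterm α ν k (x + (ε:ℝ) * T) - fterm α ν k x with hg
  -- tail vanishes
  have htail : ∀ k ∉ Finset.range (m+1), g k = 0 := by
    intro k hk
    rw [Finset.mem_range, not_lt] at hk
    obtain ⟨n, hn⟩ : ∃ n : ℕ, 2*ν*k = 2*ν*m + 2 + n := by
      have hmul : 2*ν*(m+1) ≤ 2*ν*k := Nat.mul_le_mul_left _ hk
      have hle : 2*ν*m + 2 ≤ 2*ν*k := le_trans (by nlinarith) hmul
      exact ⟨2*ν*k - (2*ν*m+2), (Nat.add_sub_cancel' hle).symm⟩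
    have hpkT : (2:ℝ)^(2*ν*k) * T = 2 * 2^n := by
      rw [hn, ← Real.rpow_natCast 2 (2*ν*m + 2 + n), hTr, ← Real.rpow_add (by norm_num)]
      rw [show ((2*ν*m + 2 + n : ℕ):ℝ) + (-(2*(ν:ℝ)*(m:ℝ)+1)) = ((n + 1 : ℕ):ℝ) by push_cast; ring]
      rw [Real.rpow_natCast]
      ring
    have : (2:ℝ)^(2*ν*k) * (x + (ε:ℝ) * T) = (2:ℝ)^(2*ν*k) * x + 2 * ((ε * 2^n : ℤ):ℝ) := by
      push_cast
      linear_combination (ε:ℝ) * hpkT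
    rw [hg]
    simp only
    unfold fterm
    rw [this, phi_add_two_int, sub_self]
  have hsum : Kfun α ν (x + (ε:ℝ) * T) - Kfun α ν x = ∑ k ∈ Finset.range (m+1), g k := by
    rw [Kfun_eq, Kfun_eq, ← Summable.tsum_sub (summable_fterm α ν hα0 hν1 _)
      (summable_fterm α ν hα0 hν1 _)]
    exact tsum_eq_sum htail
  -- middle term
  have hgm : |g m| = T * L^m := by
    have harg : (2:ℝ)^(2*ν*m) * (x + (ε:ℝ) * T) = (2:ℝ)^(2*ν*m) * x + (ε:ℝ) * (1/2) := by
      linear_combination (ε:ℝ) * hpmT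
    rw [hg]
    simp only
    unfold fterm
    rw [harg, ← mul_sub, abs_mul, abs_of_nonneg (Real.rpow_nonneg (by norm_num) _), hstep, haM]
    ring
  -- small terms
  have hsmall : ∀ k ∈ Finset.range m, |g k| ≤ L^k * T := by
    intro k _
    rw [hg]
    simp only
    unfold fterm
    rw [← mul_sub, abs_mul, abs_of_nonneg (Real.rpow_nonneg (by norm_num) _)]
    calc (2:ℝ)^(-(2*α*(ν:ℝ)*(k:ℝ))) * |phi ((2:ℝ)^(2*ν*k) * (x + (ε:ℝ)*T)) - phi ((2:ℝ)^(2*ν*k) * x)|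
        ≤ (2:ℝ)^(-(2*α*(ν:ℝ)*(k:ℝ))) * |(2:ℝ)^(2*ν*k) * (x + (ε:ℝ)*T) - (2:ℝ)^(2*ν*k) * x| :=
          mul_le_mul_of_nonneg_left (phi_lip _ _) (Real.rpow_nonneg (by norm_num) _)
      _ = (2:ℝ)^(-(2*α*(ν:ℝ)*(k:ℝ))) * ((2:ℝ)^(2*ν*k) * T) := by
          rw [show (2:ℝ)^(2*ν*k) * (x + (ε:ℝ)*T) - (2:ℝ)^(2*ν*k) * x = (2:ℝ)^(2*ν*k) * ((ε:ℝ)*T) by ring]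
          rw [abs_mul, abs_mul, hεabs, abs_of_nonneg hT.le,
            abs_of_nonneg (by positivity : (0:ℝ) ≤ (2:ℝ)^(2*ν*k))]
          ring
      _ = L^k * T := by rw [← mul_assoc, haP]
  -- assemble
  have hLm : (0:ℝ) < L^m := by positivity
  have hgeom : ∑ k ∈ Finset.range m, L^k = (L^m - 1)/(L - 1) :=
    geom_sum_eq (by linarith) m
  have h1 : |g m| ≤ |∑ k ∈ Finset.range (m+1), g k| + ∑ k ∈ Finset.range m, |g k| := by
    have : g m = (∑ k ∈ Finset.range (m+1), g k) - ∑ k ∈ Finset.range m, g k := by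
      rw [Finset.sum_range_succ]; ring
    rw [this]
    calc |(∑ k ∈ Finset.range (m+1), g k) - ∑ k ∈ Finset.range m, g k|
        ≤ |∑ k ∈ Finset.range (m+1), g k| + |∑ k ∈ Finset.range m, g k| := abs_sub _ _
      _ ≤ _ := by
          gcongr
          exact Finset.abs_sum_le_sum_abs _ _
  have h2 : ∑ k ∈ Finset.range m, |g k| ≤ ((L^m - 1)/(L-1)) * T := by
    rw [← hgeom, Finset.sum_mul]
    exact Finset.sum_le_sum hsmall
  have key : (L-2)/(L-1)*L^m + (L^m-1)/(L-1) ≤ L^m := by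
    rw [div_mul_eq_mul_div, ← add_div, div_le_iff₀ (by linarith : (0:ℝ) < L - 1)]
    nlinarith [hLm]
  have hfin : (L-2)/(L-1)*L^m * T + (L^m-1)/(L-1) * T ≤ T * L^m := by nlinarith [hT.le, key]
  rw [hgm] at h1
  rw [hsum, le_div_iff₀ hT]
  linarith [h1, h2, hfin]

noncomputable def Fq (α : ℝ) (ν : ℕ) (m : ℕ) (x : ℝ) : ℝ :=
  |(Kfun α ν (x + (2 : ℝ) ^ (-(2 * (ν : ℤ) * (m : ℤ) + 1)) ) - Kfun α ν x)
          / (2 : ℝ) ^ (-(2 * (ν : ℤ) * (m : ℤ) + 1))|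

lemma Fq_nonneg (α : ℝ) (ν : ℕ) (m : ℕ) (x : ℝ) : 0 ≤ Fq α ν m x := abs_nonneg _

lemma Kfun_cover (α : ℝ) (ν : ℕ) (hα0 : 0 < α) (hα1 : α < 1) (hν1 : 1 ≤ ν)
    (hνα : 1 < 2 * (ν:ℝ) * (1 - α)) (m : ℕ) (x : ℝ) :
    ((2:ℝ)^(2*(ν:ℝ)*(1-α)) - 2)/((2:ℝ)^(2*(ν:ℝ)*(1-α)) - 1) * ((2:ℝ)^(2*(ν:ℝ)*(1-α)))^m
      ≤ Fq α ν m x ∨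
    ((2:ℝ)^(2*(ν:ℝ)*(1-α)) - 2)/((2:ℝ)^(2*(ν:ℝ)*(1-α)) - 1) * ((2:ℝ)^(2*(ν:ℝ)*(1-α)))^m
      ≤ Fq α ν m (x - (2 : ℝ) ^ (-(2 * (ν : ℤ) * (m : ℤ) + 1))) := by
  set T : ℝ := (2:ℝ)^(-(2*(ν:ℤ)*(m:ℤ)+1)) with hTdef
  have hT : (0:ℝ) < T := zpow_pos (by norm_num) _
  rcases phi_half_step ((2:ℝ)^(2*ν*m) * x) with h | h
  · left
    have hstep : |phi ((2:ℝ)^(2*ν*m) * x + ((1:ℤ):ℝ) * (1/2)) - phi ((2:ℝ)^(2*ν*m) * x)| = 1/2 := by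
      rw [show ((1:ℤ):ℝ) * (1/2) = 1/2 by norm_num]; exact h
    have := Kfun_pointwise α ν hα0 hα1 hν1 hνα m x 1 (Or.inl rfl) hstep
    rw [show x + ((1:ℤ):ℝ) * T = x + T by push_cast; ring] at this
    unfold Fq
    rw [abs_div, abs_of_pos hT]
    exact this
  · right
    have hstep : |phi ((2:ℝ)^(2*ν*m) * x + ((-1:ℤ):ℝ) * (1/2)) - phi ((2:ℝ)^(2*ν*m) * x)| = 1/2 := by
      rw [show (2:ℝ)^(2*ν*m) * x + ((-1:ℤ):ℝ) * (1/2) = (2:ℝ)^(2*ν*m) * x - 1/2 by push_cast; ring]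
      exact h
    have := Kfun_pointwise α ν hα0 hα1 hν1 hνα m x (-1) (Or.inr rfl) hstep
    rw [show x + ((-1:ℤ):ℝ) * T = x - T by push_cast; ring] at this
    unfold Fq
    rw [abs_div, abs_of_pos hT, show x - T + T = x by ring, abs_sub_comm]
    exact this

open MeasureTheory Set

theorem Kfun_L1_difference_quotient_lower_bound (α : ℝ) (ν : ℕ)
    (hα : α ∈ Set.Ioo (0 : ℝ) 1) (hν : 1 / (1 - α) < 2 * (ν : ℝ)) (M : ℝ) (hM : 1 ≤ M)
    (m : ℕ) :
    (1 / (2 * M)) * ∫ x in (-M)..M,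
        |(Kfun α ν (x + (2 : ℝ) ^ (-(2 * (ν : ℤ) * (m : ℤ) + 1)) ) - Kfun α ν x)
          / (2 : ℝ) ^ (-(2 * (ν : ℤ) * (m : ℤ) + 1))| ≥
      (1 / 4) * (((2 : ℝ) ^ (2 * (ν : ℝ) * (1 - α)) - 2)
          / ((2 : ℝ) ^ (2 * (ν : ℝ) * (1 - α)) - 1))
        * ((2 : ℝ) ^ (2 * (ν : ℝ) * (1 - α))) ^ m := by
  obtain ⟨hα0, hα1⟩ := hα
  have h1α : (0:ℝ) < 1 - α := by linarith
  have hνα : 1 < 2 * (ν:ℝ) * (1 - α) := by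
    rw [div_lt_iff₀ h1α] at hν
    linarith
  have hν1 : 1 ≤ ν := by
    by_contra h
    push_neg at h
    interval_cases ν
    simp at hνα
    nlinarith
  set T : ℝ := (2:ℝ)^(-(2*(ν:ℤ)*(m:ℤ)+1)) with hTdef
  set L : ℝ := (2:ℝ)^(2*(ν:ℝ)*(1-α)) with hLdef
  set c : ℝ := (L - 2)/(L - 1) with hcdef
  have hT : (0:ℝ) < T := zpow_pos (by norm_num) _
  have hTle : T ≤ 1/2 := by
    rw [hTdef, show (1/2 : ℝ) = (2:ℝ)^(-1 : ℤ) by norm_num]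
    apply zpow_le_zpow_right₀ (by norm_num)
    have : (0:ℤ) ≤ 2*(ν:ℤ)*(m:ℤ) := by positivity
    omega
  have hL2 : (2:ℝ) < L := by
    rw [hLdef]
    calc (2:ℝ) = (2:ℝ) ^ (1:ℝ) := (Real.rpow_one 2).symm
      _ < _ := (Real.rpow_lt_rpow_left_iff (by norm_num : (1:ℝ) < 2)).mpr hνα
  have hcP : (0:ℝ) ≤ c * L^m := by
    apply mul_nonneg (div_nonneg (by linarith) (by linarith))
    positivity
  have hFcont : Continuous (Fq α ν m) := by
    have hK := Kfun_continuous α ν hα0 hν1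
    exact (((hK.comp (continuous_id.add continuous_const)).sub hK).div_const _).abs
  -- the set where the difference quotient is large
  set S : Set ℝ := {z | c * L^m ≤ Fq α ν m z} with hSdef
  have hSmeas : MeasurableSet S := (isClosed_le continuous_const hFcont).measurableSet
  set A : Set ℝ := S ∩ Ioc (-M) M with hAdef
  have hAmeas : MeasurableSet A := hSmeas.inter measurableSet_Ioc
  have hMpos : (0:ℝ) < M := by linarith
  -- covering
  have hcover : Ioc (-M) M ⊆ A ∪ ((fun z => z + (-T)) ⁻¹' (S ∩ Ioc (-M - T) (M - T))) := by
    intro z hz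
    rcases Kfun_cover α ν hα0 hα1 hν1 hνα m z with h | h
    · exact Or.inl ⟨h, hz⟩
    · right
      obtain ⟨hz1, hz2⟩ := hz
      simp only [mem_preimage, mem_inter_iff, mem_Ioc]
      rw [show z + -T = z - T by ring]
      exact ⟨h, by linarith, by linarith⟩
  -- measure bound
  have hsplit : S ∩ Ioc (-M - T) (M - T) ⊆ A ∪ Ioc (-M - T) (-M) := by
    intro z ⟨hzS, hz⟩
    simp only [mem_Ioc] at hz
    rcases le_or_gt z (-M) with h | h
    · exact Or.inr ⟨hz.1, h⟩
    · exact Or.inl ⟨hzS, h, by linarith [hz.2]⟩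
  have hmeas_bound : ENNReal.ofReal (2*M) ≤ 2 * volume A + ENNReal.ofReal T := by
    have h0 : ENNReal.ofReal (2*M) = volume (Ioc (-M) M) := by
      rw [Real.volume_Ioc]; congr 1; ring
    have h1 : volume (Ioc (-M) M) ≤ volume A + volume ((fun z => z + (-T)) ⁻¹' (S ∩ Ioc (-M - T) (M - T))) :=
      le_trans (measure_mono hcover) (measure_union_le _ _)
    have h2 : volume ((fun z => z + (-T)) ⁻¹' (S ∩ Ioc (-M - T) (M - T)))
        = volume (S ∩ Ioc (-M - T) (M - T)) := measure_preimage_add_right volume (-T) _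
    have h3 : volume (S ∩ Ioc (-M - T) (M - T)) ≤ volume A + ENNReal.ofReal T := by
      refine le_trans (measure_mono hsplit) (le_trans (measure_union_le _ _) ?_)
      rw [Real.volume_Ioc, show -M - (-M - T) = T by ring]
    rw [h0]
    calc volume (Ioc (-M) M) ≤ volume A + (volume A + ENNReal.ofReal T) := by
          refine le_trans h1 ?_
          rw [h2]
          exact add_le_add_right h3 _
      _ = 2 * volume A + ENNReal.ofReal T := by ring
  have hAfin : volume A ≠ ⊤ := by
    apply ne_top_of_le_ne_top _ (measure_mono (inter_subset_right : A ⊆ Ioc (-M) M))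
    rw [Real.volume_Ioc]
    exact ENNReal.ofReal_ne_top
  set a : ℝ := (volume A).toReal with hadef
  have ha0 : 0 ≤ a := ENNReal.toReal_nonneg
  have haM : M - 1/4 ≤ a := by
    have heq : 2 * volume A + ENNReal.ofReal T = ENNReal.ofReal (2*a + T) := by
      rw [ENNReal.ofReal_add (by linarith) hT.le, ENNReal.ofReal_mul (by norm_num : (0:ℝ) ≤ 2)]
      rw [hadef, ENNReal.ofReal_toReal hAfin, show ENNReal.ofReal 2 = (2:ENNReal) by norm_num]
    rw [heq, ENNReal.ofReal_le_ofReal_iff (by linarith)] at hmeas_bound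
    linarith
  -- integral bound
  have hInt : IntegrableOn (Fq α ν m) (Ioc (-M) M) := hFcont.integrableOn_Ioc
  have hIeq : (∫ x in (-M)..M,
        |(Kfun α ν (x + (2 : ℝ) ^ (-(2 * (ν : ℤ) * (m : ℤ) + 1)) ) - Kfun α ν x)
          / (2 : ℝ) ^ (-(2 * (ν : ℤ) * (m : ℤ) + 1))|)
      = ∫ x in Ioc (-M) M, Fq α ν m x := by
    rw [intervalIntegral.integral_of_le (by linarith : -M ≤ M)]
    rfl
  have hI1 : ∫ x in A, (c * L^m) ≤ ∫ x in A, Fq α ν m x := by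
    apply setIntegral_mono_on (integrableOn_const hAfin)
      (hInt.mono_set inter_subset_right) hAmeas
    intro z hz
    exact hz.1
  have hI2 : ∫ x in A, Fq α ν m x ≤ ∫ x in Ioc (-M) M, Fq α ν m x := by
    apply setIntegral_mono_set hInt
    · exact Filter.Eventually.of_forall (fun z => Fq_nonneg α ν m z)
    · exact HasSubset.Subset.eventuallyLE inter_subset_right
  have hI3 : ∫ x in A, (c * L^m) = a * (c * L^m) := by
    rw [setIntegral_const, smul_eq_mul]; rfl
  have hIlow : a * (c * L^m) ≤ ∫ x in Ioc (-M) M, Fq α ν m x := by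
    rw [← hI3]; exact le_trans hI1 hI2
  have h5 : (M/2) * (c * L^m) ≤ ∫ x in Ioc (-M) M, Fq α ν m x := by
    refine le_trans ?_ hIlow
    apply mul_le_mul_of_nonneg_right _ hcP
    linarith
  rw [ge_iff_le, hIeq]
  have h6 : (1/(2*M)) * ((M/2) * (c * L^m)) = (1/4) * c * L^m := by
    field_simp
    ring
  calc (1/4) * c * L^m = (1/(2*M)) * ((M/2) * (c * L^m)) := h6.symm
    _ ≤ (1/(2*M)) * ∫ x in Ioc (-M) M, Fq α ν m x := by
        apply mul_le_mul_of_nonneg_left h5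
        positivity
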